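/- Let c be a diffusion coefficient on [0,H] with bounds c_m ≤ c ≤ c_M, let ε > 0, and let μ, λ > 0 satisfy λ ≥ (c_M + ε) μ². Let u be a reduced eigenfunction for (c, μ, λ). If z < z' are zeros of u in [0,H] with u(y) ≠ 0 for all y ∈ (z, z'), then z' − z ≤ 2π μ⁻¹ √(c_M/ε). -/

import Mathlib

open Set MeasureTheory Filter

/-- `u` (with derivative `u'`) is a reduced eigenfunction for `(c, μ, lam)` on `[0,H]`. -/
def ReducedEigenfunction (H : ℝ) (c : ℝ → ℝ) (μ lam : ℝ) (u u' : ℝ → ℝ) : Prop :=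
  (∀ y ∈ Set.Icc (0:ℝ) H, HasDerivWithinAt u (u' y) (Set.Icc (0:ℝ) H) y) ∧
  ContinuousOn u' (Set.Icc (0:ℝ) H) ∧
  (∀ y ∈ Set.Icc (0:ℝ) H, u' y = u' 0 - ∫ t in (0:ℝ)..y, (lam / c t - μ ^ 2) * u t) ∧
  (∃ y ∈ Set.Icc (0:ℝ) H, u y ≠ 0) ∧
  u 0 = 0 ∧ u H = 0


lemma half_aux (k a b : ℝ) (v v' : ℝ → ℝ)
    (hk : 0 < k) (hab : a < b)
    (hcv : ContinuousOn v (Icc a b))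
    (hda : ∀ y ∈ Ico a b, HasDerivAt v (v' y) y)
    (hc' : ContinuousOn v' (Icc a b))
    (hkey : ∀ y ∈ Icc a b, v' y ≤ -k ^ 2 * ∫ t in a..y, v t)
    (hpos : ∀ y ∈ Ico a b, 0 < v y)
    (hvb : v b = 0) :
    b - a ≤ 2 / k := by
  set y1 : ℝ := (a + b) / 2 with hy1def
  have hay1 : a < y1 := by simp only [hy1def]; linarith
  have hy1b : y1 < b := by simp only [hy1def]; linarith
  set m : ℝ := v y1 with hmdef
  have hm : 0 < m := hpos y1 ⟨le_of_lt hay1, hy1b⟩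
  have hv0 : ∀ t ∈ Icc a b, 0 ≤ v t := by
    intro t ht
    rcases eq_or_lt_of_le ht.2 with h | h
    · rw [h, hvb]
    · exact le_of_lt (hpos t ⟨ht.1, h⟩)
  have hiv' : IntervalIntegrable v' volume a b := hc'.intervalIntegrable_of_Icc hab.le
  have hiv : IntervalIntegrable v volume a b := hcv.intervalIntegrable_of_Icc hab.le
  have hsub : ∀ p q : ℝ, a ≤ p → p ≤ q → q ≤ b → uIcc p q ⊆ uIcc a b := by
    intro p q h1 h2 h3
    rw [uIcc_of_le h2, uIcc_of_le hab.le]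
    exact Icc_subset_Icc h1 h3
  -- v' ≤ 0 on [a,b]
  have hv'np : ∀ y ∈ Icc a b, v' y ≤ 0 := by
    intro y hy
    have h1 : (0:ℝ) ≤ ∫ t in a..y, v t := by
      apply intervalIntegral.integral_nonneg hy.1
      intro t ht
      exact hv0 t ⟨ht.1, le_trans ht.2 hy.2⟩
    have := hkey y hy
    nlinarith
  -- v ≥ m on [a, y1]
  have hge : ∀ t ∈ Icc a y1, m ≤ v t := by
    intro t ht
    have hftc : ∫ s in t..y1, v' s = v y1 - v t := by
      apply intervalIntegral.integral_eq_sub_of_hasDerivAt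
      · intro x hx
        rw [uIcc_of_le ht.2] at hx
        exact hda x ⟨le_trans ht.1 hx.1, lt_of_le_of_lt hx.2 hy1b⟩
      · exact hiv'.mono_set (hsub t y1 ht.1 ht.2 hy1b.le)
    have hint : (0:ℝ) ≤ ∫ s in t..y1, -v' s := by
      apply intervalIntegral.integral_nonneg ht.2
      intro s hs
      have := hv'np s ⟨le_trans ht.1 hs.1, le_trans hs.2 hy1b.le⟩
      linarith
    rw [intervalIntegral.integral_neg, hftc] at hint
    linarith
  -- integral bound
  have hintm : (y1 - a) * m ≤ ∫ t in a..y1, v t := by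
    have := intervalIntegral.integral_mono_on hay1.le
      (intervalIntegrable_const (c := m))
      (hiv.mono_set (hsub a y1 le_rfl hay1.le hy1b.le)) hge
    rwa [intervalIntegral.integral_const, smul_eq_mul] at this
  -- v' bound on [y1, b]
  have hv'b : ∀ y ∈ Icc y1 b, v' y ≤ -k ^ 2 * ((y1 - a) * m) := by
    intro y hy
    have h1 : (∫ t in a..y1, v t) + (∫ t in y1..y, v t) = ∫ t in a..y, v t :=
      intervalIntegral.integral_add_adjacent_intervals
        (hiv.mono_set (hsub a y1 le_rfl hay1.le hy1b.le))
        (hiv.mono_set (hsub y1 y hay1.le hy.1 hy.2))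
    have h2 : (0:ℝ) ≤ ∫ t in y1..y, v t := by
      apply intervalIntegral.integral_nonneg hy.1
      intro t ht
      exact hv0 t ⟨le_trans hay1.le ht.1, le_trans ht.2 hy.2⟩
    have h3 := hkey y ⟨le_trans hay1.le hy.1, hy.2⟩
    nlinarith
  -- FTC on [y1, b]
  have hftc2 : ∫ s in y1..b, v' s = v b - v y1 := by
    apply intervalIntegral.integral_eq_sub_of_hasDeriv_right_of_le hy1b.le
      (hcv.mono (Icc_subset_Icc hay1.le le_rfl))
    · intro x hx
      exact (hda x ⟨le_trans hay1.le hx.1.le, hx.2⟩).hasDerivWithinAt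
    · exact hiv'.mono_set (hsub y1 b hay1.le hy1b.le le_rfl)
  have hmono : (∫ s in y1..b, v' s) ≤ (b - y1) * (-k ^ 2 * ((y1 - a) * m)) := by
    have := intervalIntegral.integral_mono_on hy1b.le
      (hiv'.mono_set (hsub y1 b hay1.le hy1b.le le_rfl))
      (intervalIntegrable_const (c := -k ^ 2 * ((y1 - a) * m))) hv'b
    rwa [intervalIntegral.integral_const, smul_eq_mul] at this
  rw [hftc2, hvb] at hmono
  have hlen : y1 - a = (b - a) / 2 := by simp only [hy1def]; ring
  have hlen2 : b - y1 = (b - a) / 2 := by simp only [hy1def]; ring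
  rw [hlen, hlen2] at hmono
  rw [le_div_iff₀ hk]
  nlinarith [sq_nonneg (k * (b - a) - 2), mul_pos hk (sub_pos.mpr hab)]
lemma key_aux (k z z' : ℝ) (v v' g : ℝ → ℝ)
    (hk : 0 < k) (hzz' : z < z')
    (hcv : ContinuousOn v (Icc z z'))
    (hd : ∀ y ∈ Ioo z z', HasDerivAt v (v' y) y)
    (hc' : ContinuousOn v' (Icc z z'))
    (hg : IntervalIntegrable g volume z z')
    (hgk : ∀ t ∈ Icc z z', k ^ 2 * v t ≤ g t)
    (hid : ∀ x ∈ Icc z z', ∀ y ∈ Icc z z', v' y - v' x = -∫ t in x..y, g t)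
    (hpos : ∀ y ∈ Ioo z z', 0 < v y)
    (hvz : v z = 0) (hvz' : v z' = 0) :
    z' - z ≤ 4 / k := by
  have hsub : ∀ p q : ℝ, z ≤ p → p ≤ q → q ≤ z' → uIcc p q ⊆ uIcc z z' := by
    intro p q h1 h2 h3
    rw [uIcc_of_le h2, uIcc_of_le hzz'.le]
    exact Icc_subset_Icc h1 h3
  have hiv : IntervalIntegrable v volume z z' := hcv.intervalIntegrable_of_Icc hzz'.le
  -- max point
  obtain ⟨y0, hy0m, hmax⟩ := isCompact_Icc.exists_isMaxOn (nonempty_Icc.mpr hzz'.le)  hcv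
  have hmidm : (z + z') / 2 ∈ Ioo z z' := ⟨by linarith, by linarith⟩
  have hvy0 : 0 < v y0 := lt_of_lt_of_le (hpos _ hmidm) (hmax ⟨hmidm.1.le, hmidm.2.le⟩)
  have hy0 : y0 ∈ Ioo z z' := by
    have h1 : y0 ≠ z := by
      intro h
      rw [h, hvz] at hvy0
      exact lt_irrefl 0 hvy0
    have h2 : y0 ≠ z' := by
      intro h
      rw [h, hvz'] at hvy0
      exact lt_irrefl 0 hvy0
    exact ⟨lt_of_le_of_ne hy0m.1 (Ne.symm h1), lt_of_le_of_ne hy0m.2 h2⟩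
  -- derivative vanishes at the max
  have hv'y0 : v' y0 = 0 := by
    have hloc : IsLocalMax v y0 := by
      apply hmax.isLocalMax
      exact Icc_mem_nhds hy0.1 hy0.2
    exact hloc.hasDerivAt_eq_zero (hd y0 hy0)
  -- monotone comparison of integrals of g and k^2 v
  have hgmono : ∀ x y : ℝ, z ≤ x → x ≤ y → y ≤ z' →
      k ^ 2 * ∫ t in x..y, v t ≤ ∫ t in x..y, g t := by
    intro x y h1 h2 h3
    rw [← intervalIntegral.integral_const_mul]
    apply intervalIntegral.integral_mono_on h2
    · exact (continuousOn_const.mul hcv).intervalIntegrable_of_Icc hzz'.le |>.mono_set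
        (hsub x y h1 h2 h3)
    · exact hg.mono_set (hsub x y h1 h2 h3)
    · intro t ht
      exact hgk t ⟨le_trans h1 ht.1, le_trans ht.2 h3⟩
  -- right half
  have hright : z' - y0 ≤ 2 / k := by
    apply half_aux k y0 z' v v' hk hy0.2
      (hcv.mono (Icc_subset_Icc hy0.1.le le_rfl))
    · intro y hy
      exact hd y ⟨lt_of_lt_of_le hy0.1 hy.1, hy.2⟩
    · exact hc'.mono (Icc_subset_Icc hy0.1.le le_rfl)
    · intro y hy
      have h1 := hid y0 (Ioo_subset_Icc_self hy0) y ⟨le_trans hy0.1.le hy.1, hy.2⟩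
      rw [hv'y0, sub_zero] at h1
      have h2 := hgmono y0 y hy0.1.le hy.1 hy.2
      linarith
    · intro y hy
      rcases eq_or_lt_of_le hy.1 with h | h
      · exact h ▸ hvy0
      · exact hpos y ⟨lt_trans hy0.1 h, hy.2⟩
    · exact hvz'
  -- left half via reflection
  have hleft : y0 - z ≤ 2 / k := by
    have hmaps : ∀ s ∈ Icc z y0, z + y0 - s ∈ Icc z y0 := by
      intro s hs
      exact ⟨by linarith [hs.2], by linarith [hs.1]⟩
    have hcont_refl : ContinuousOn (fun s => v (z + y0 - s)) (Icc z y0) := by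
      apply (hcv.mono (Icc_subset_Icc le_rfl hy0.2.le)).comp
        (Continuous.continuousOn (by continuity))
      exact hmaps
    have hres : (2 : ℝ) / k ≥ y0 - z := by
      have := half_aux k z y0 (fun s => v (z + y0 - s)) (fun s => -v' (z + y0 - s))
        hk hy0.1 hcont_refl ?_ ?_ ?_ ?_ ?_
      · linarith
      · -- derivative
        intro s hs
        have hr : z + y0 - s ∈ Ioo z z' := by
          constructor
          · linarith [hs.2]
          · have : z + y0 - s ≤ y0 := by linarith [hs.1]
            exact lt_of_le_of_lt this hy0.2
        have h1 : HasDerivAt (fun s : ℝ => z + y0 - s) (-1) s := by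
          simpa using (hasDerivAt_id s).const_sub (z + y0)
        have := (hd _ hr).comp s h1
        simp only [mul_neg, mul_one] at this
        exact this
      · -- continuity of derivative
        apply ContinuousOn.neg
        apply (hc'.mono (Icc_subset_Icc le_rfl hy0.2.le)).comp
          (Continuous.continuousOn (by continuity))
        exact hmaps
      · -- key inequality
        intro s hs
        show -v' (z + y0 - s) ≤ -k ^ 2 * ∫ t in z..s, v (z + y0 - t)
        have hr : z + y0 - s ∈ Icc z y0 := hmaps s hs
        have hrefl : (∫ t in z..s, v (z + y0 - t)) = ∫ t in (z + y0 - s)..y0, v t := by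
          have := intervalIntegral.integral_comp_sub_left (a := z) (b := s) v (z + y0)
          simpa using this
        have h1 := hid y0 (Ioo_subset_Icc_self hy0) (z + y0 - s)
          ⟨hr.1, le_trans hr.2 hy0.2.le⟩
        rw [hv'y0, sub_zero, intervalIntegral.integral_symm] at h1
        -- h1 : v' (z+y0-s) = - - ∫ t in (z+y0-s)..y0, g t
        have h2 := hgmono (z + y0 - s) y0 hr.1 hr.2 hy0.2.le
        rw [hrefl]
        rw [neg_neg] at h1
        linarith
      · -- positivity
        intro s hs
        apply hpos
        constructor
        · linarith [hs.2]
        · have : z + y0 - s ≤ y0 := by linarith [hs.1]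
          exact lt_of_le_of_lt this hy0.2
      · simpa using hvz
    linarith
  have h4 : (2:ℝ) / k + 2 / k = 4 / k := by ring
  linarith
theorem stmt3
    (H c_m c_M ε μ lam z z' : ℝ) (c u u' : ℝ → ℝ)
    (hH : 0 < H) (hcm : 0 < c_m) (hcmM : c_m ≤ c_M) (hε : 0 < ε)
    (hmeas : Measurable c)
    (hbounds : ∀ y ∈ Set.Icc (0:ℝ) H, c_m ≤ c y ∧ c y ≤ c_M)
    (hμ : 0 < μ) (hlam : (c_M + ε) * μ ^ 2 ≤ lam)
    (hu : ReducedEigenfunction H c μ lam u u')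
    (hz : z ∈ Set.Icc (0:ℝ) H) (hz' : z' ∈ Set.Icc (0:ℝ) H) (hzz' : z < z')
    (huz : u z = 0) (huz' : u z' = 0)
    (hne : ∀ y ∈ Set.Ioo z z', u y ≠ 0) :
    z' - z ≤ 2 * Real.pi * μ⁻¹ * Real.sqrt (c_M / ε) := by
  obtain ⟨hderiv, hcont', hint, -, -, -⟩ := hu
  have hcM : 0 < c_M := lt_of_lt_of_le hcm hcmM
  have hlam0 : 0 < lam := by nlinarith [pow_pos hμ 2]
  have ucont : ContinuousOn u (Icc 0 H) := fun y hy => (hderiv y hy).continuousWithinAt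
  have hsub0 : Icc z z' ⊆ Icc 0 H := Icc_subset_Icc hz.1 hz'.2
  set g0 : ℝ → ℝ := fun t => (lam / c t - μ ^ 2) * u t with hg0def
  obtain ⟨C, hC⟩ := isCompact_Icc.exists_bound_of_continuousOn ucont
  have hg0int : IntervalIntegrable g0 volume 0 H := by
    rw [intervalIntegrable_iff_integrableOn_Ioc_of_le hH.le]
    have hmeasu : AEMeasurable u (volume.restrict (Ioc 0 H)) := by
      apply (ucont.aemeasurable measurableSet_Icc).mono_measure
      exact Measure.restrict_mono Ioc_subset_Icc_self le_rfl
    have hmeasg : AEStronglyMeasurable g0 (volume.restrict (Ioc 0 H)) := by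
      apply AEMeasurable.aestronglyMeasurable
      exact (((measurable_const.div hmeas).sub measurable_const).aemeasurable.mul hmeasu)
    apply Integrable.mono' (g := fun _ => (lam / c_m + μ ^ 2) * C)
      (integrable_const _) hmeasg
    rw [ae_restrict_iff' measurableSet_Ioc]
    apply ae_of_all
    intro t ht
    have ht' : t ∈ Icc (0:ℝ) H := Ioc_subset_Icc_self ht
    obtain ⟨hb1, hb2⟩ := hbounds t ht'
    have hct : 0 < c t := lt_of_lt_of_le hcm hb1
    have hq1 : lam / c t ≤ lam / c_m := div_le_div_of_nonneg_left hlam0.le hcm hb1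
    have hq2 : 0 < lam / c t := div_pos hlam0 hct
    have hCt := hC t ht'
    have hCnn : 0 ≤ C := le_trans (norm_nonneg _) hCt
    have habs : |lam / c t - μ ^ 2| ≤ lam / c_m + μ ^ 2 := by
      rw [abs_le]
      constructor <;> nlinarith [sq_nonneg μ]
    calc ‖g0 t‖ = |lam / c t - μ ^ 2| * |u t| := by
          simp [hg0def, abs_mul]
      _ ≤ (lam / c_m + μ ^ 2) * C := by
          apply mul_le_mul habs _ (abs_nonneg _) (by positivity)
          simpa using hCt
  have hid0 : ∀ x ∈ Icc z z', ∀ y ∈ Icc z z', u' y - u' x = -∫ t in x..y, g0 t := by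
    intro x hx y hy
    have hx' := hsub0 hx
    have hy' := hsub0 hy
    rw [hint x hx', hint y hy']
    have h1 : (∫ t in (0:ℝ)..y, g0 t) - ∫ t in (0:ℝ)..x, g0 t = ∫ t in x..y, g0 t := by
      apply intervalIntegral.integral_interval_sub_left
      · apply hg0int.mono_set
        rw [uIcc_of_le hy'.1, uIcc_of_le hH.le]
        exact Icc_subset_Icc le_rfl hy'.2
      · apply hg0int.mono_set
        rw [uIcc_of_le hx'.1, uIcc_of_le hH.le]
        exact Icc_subset_Icc le_rfl hx'.2
    linarith
  have hdIoo : ∀ y ∈ Ioo z z', HasDerivAt u (u' y) y := by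
    intro y hy
    apply (hderiv y (hsub0 (Ioo_subset_Icc_self hy))).hasDerivAt
    apply Icc_mem_nhds
    · exact lt_of_le_of_lt hz.1 hy.1
    · exact lt_of_lt_of_le hy.2 hz'.2
  set k : ℝ := μ * Real.sqrt (ε / c_M) with hkdef
  have hk : 0 < k := mul_pos hμ (Real.sqrt_pos.mpr (div_pos hε hcM))
  have hk2 : k ^ 2 = μ ^ 2 * (ε / c_M) := by
    rw [hkdef, mul_pow, Real.sq_sqrt (div_nonneg hε.le hcM.le)]
  have hq : ∀ t ∈ Icc z z', k ^ 2 ≤ lam / c t - μ ^ 2 := by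
    intro t ht
    obtain ⟨hb1, hb2⟩ := hbounds t (hsub0 ht)
    have hct : 0 < c t := lt_of_lt_of_le hcm hb1
    have h1 : lam / c_M ≤ lam / c t := div_le_div_of_nonneg_left hlam0.le hct hb2
    have h2 : (c_M + ε) * μ ^ 2 / c_M ≤ lam / c_M := by gcongr
    have h3 : (c_M + ε) * μ ^ 2 / c_M = μ ^ 2 + μ ^ 2 * (ε / c_M) := by
      field_simp
    rw [hk2]
    rw [h3] at h2
    linarith
  have hmid : (z + z') / 2 ∈ Ioo z z' := ⟨by linarith, by linarith⟩
  have hivt : ∀ a b : ℝ, a ∈ Ioo z z' → b ∈ Ioo z z' → a < b →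
      u a < 0 → 0 < u b → False := by
    intro a b ha hb hab h1 h2
    have hcc : ContinuousOn u (Icc a b) := by
      apply ucont.mono
      exact (Icc_subset_Icc ha.1.le hb.2.le).trans hsub0
    obtain ⟨t, ht, hut⟩ := intermediate_value_Ioo hab.le hcc
      (show (0:ℝ) ∈ Ioo (u a) (u b) from ⟨h1, h2⟩)
    exact hne t ⟨lt_trans ha.1 ht.1, lt_trans ht.2 hb.2⟩ hut
  have hivt' : ∀ a b : ℝ, a ∈ Ioo z z' → b ∈ Ioo z z' → a < b →
      0 < u a → u b < 0 → False := by
    intro a b ha hb hab h1 h2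
    have hcc : ContinuousOn u (Icc a b) := by
      apply ucont.mono
      exact (Icc_subset_Icc ha.1.le hb.2.le).trans hsub0
    obtain ⟨t, ht, hut⟩ := intermediate_value_Ioo' hab.le hcc
      (show (0:ℝ) ∈ Ioo (u b) (u a) from ⟨h2, h1⟩)
    exact hne t ⟨lt_trans ha.1 ht.1, lt_trans ht.2 hb.2⟩ hut
  have hsign : (∀ y ∈ Ioo z z', 0 < u y) ∨ (∀ y ∈ Ioo z z', u y < 0) := by
    rcases (hne _ hmid).lt_or_gt with hneg | hpos
    · right
      intro y hy
      rcases lt_trichotomy (u y) 0 with h | h | h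
      · exact h
      · exact absurd h (hne y hy)
      · exfalso
        rcases lt_trichotomy y ((z + z') / 2) with hlt | heq | hgt
        · exact hivt' y _ hy hmid hlt h hneg
        · rw [heq] at h; linarith
        · exact hivt _ y hmid hy hgt hneg h
    · left
      intro y hy
      rcases lt_trichotomy (u y) 0 with h | h | h
      · exfalso
        rcases lt_trichotomy y ((z + z') / 2) with hlt | heq | hgt
        · exact hivt y _ hy hmid hlt h hpos
        · rw [heq] at h; linarith
        · exact hivt' _ y hmid hy hgt hpos h
      · exact absurd h (hne y hy)
      · exact h
  have hmain : z' - z ≤ 4 / k := by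
    rcases hsign with hpos | hneg
    · apply key_aux k z z' u u' g0 hk hzz' (ucont.mono hsub0) hdIoo (hcont'.mono hsub0)
        (hg0int.mono_set ?_) ?_ hid0 hpos huz huz'
      · rw [uIcc_of_le hzz'.le, uIcc_of_le hH.le]
        exact Icc_subset_Icc hz.1 hz'.2
      · intro t ht
        have hqt := hq t ht
        have hut : 0 ≤ u t := by
          rcases eq_or_lt_of_le ht.1 with h | h
          · rw [← h, huz]
          · rcases eq_or_lt_of_le ht.2 with h2 | h2
            · rw [h2, huz']
            · exact (hpos t ⟨h, h2⟩).le
        exact mul_le_mul_of_nonneg_right hqt hut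
    · apply key_aux k z z' (fun y => -u y) (fun y => -u' y) (fun t => -g0 t) hk hzz'
        ((ucont.mono hsub0).neg) ?_ ((hcont'.mono hsub0).neg)
        ((hg0int.mono_set ?_).neg) ?_ ?_ ?_ (by simp [huz]) (by simp [huz'])
      · intro y hy
        exact (hdIoo y hy).neg
      · rw [uIcc_of_le hzz'.le, uIcc_of_le hH.le]
        exact Icc_subset_Icc hz.1 hz'.2
      · intro t ht
        have hqt := hq t ht
        have hut : u t ≤ 0 := by
          rcases eq_or_lt_of_le ht.1 with h | h
          · rw [← h, huz]
          · rcases eq_or_lt_of_le ht.2 with h2 | h2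
            · rw [h2, huz']
            · exact (hneg t ⟨h, h2⟩).le
        have h5 : k ^ 2 * (-u t) ≤ (lam / c t - μ ^ 2) * (-u t) :=
          mul_le_mul_of_nonneg_right hqt (by linarith)
        simp only [hg0def]
        nlinarith
      · intro x hx y hy
        have h6 := hid0 x hx y hy
        rw [intervalIntegral.integral_neg]
        simp only [neg_neg]
        linarith
      · intro y hy
        simpa using (hneg y hy)
  have hpi : (4:ℝ) ≤ 2 * Real.pi := by
    have := Real.pi_gt_three
    linarith
  have h4 : 4 / k ≤ 2 * Real.pi / k := by gcongr
  have hsq : Real.sqrt (c_M / ε) = (Real.sqrt (ε / c_M))⁻¹ := by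
    rw [← Real.sqrt_inv, inv_div]
  have heq : 2 * Real.pi / k = 2 * Real.pi * μ⁻¹ * Real.sqrt (c_M / ε) := by
    rw [hsq, hkdef, div_eq_mul_inv, mul_inv]
    ring
  rw [← heq]
  exact le_trans hmain h4
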